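/- Let h : [0,∞) → ℝ be strictly convex and increasing, ‖·‖ a norm on ℝ², c(z) = h(‖z‖), and p ∈ ℝ². If the face ∂c*(p) contains two distinct points z ≠ z', then ‖z‖ = ‖z'‖ is false or the segment [z/‖z‖, z'/‖z'‖] lies in the unit sphere; more precisely: either ∂c*(p) is a singleton, or there exist t ≥ 0 and a maximal segment F contained in the unit sphere {‖w‖ = 1} such that ∂c*(p) ⊆ t·F. -/

import Mathlib

set_option maxHeartbeats 1000000

/-- The Legendre–Fenchel conjugate of a real-valued function on `ℝ²`, valued in `EReal`. -/
noncomputable def fenchelConj (c : EuclideanSpace ℝ (Fin 2) → ℝ)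
    (p : EuclideanSpace ℝ (Fin 2)) : EReal :=
  ⨆ z, (((inner ℝ p z : ℝ) - c z : ℝ) : EReal)

/-- The face `∂c*(p)` of `c`. -/
noncomputable def face (c : EuclideanSpace ℝ (Fin 2) → ℝ)
    (p : EuclideanSpace ℝ (Fin 2)) : Set (EuclideanSpace ℝ (Fin 2)) :=
  {z | ∀ q, fenchelConj c p + ((inner ℝ z (q - p) : ℝ) : EReal) ≤ fenchelConj c q}


private lemma stmt19_subgrad (N : EuclideanSpace ℝ (Fin 2) → ℝ)
    (hN0 : ∀ z, N z = 0 ↔ z = 0)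
    (hNsmul : ∀ (a : ℝ) (z : EuclideanSpace ℝ (Fin 2)), N (a • z) = |a| * N z)
    (hNadd : ∀ z w, N (z + w) ≤ N z + N w)
    (h : ℝ → ℝ)
    (hmono : MonotoneOn h (Set.Ici 0))
    (hconv : ConvexOn ℝ (Set.Ici 0) h)
    (z₀ : EuclideanSpace ℝ (Fin 2)) :
    ∃ q₀ : EuclideanSpace ℝ (Fin 2), ∀ z,
      (inner ℝ q₀ z : ℝ) - h (N z) ≤ (inner ℝ q₀ z₀ : ℝ) - h (N z₀) := by
  have hNneg : ∀ z, 0 ≤ N z := by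
    intro z
    have h1 := hNadd z (-z)
    have h2 : N (-z) = N z := by
      have := hNsmul (-1) z; simpa using this
    have h3 : N (z + -z) = 0 := by
      rw [add_neg_cancel]; exact (hN0 0).mpr rfl
    rw [h3, h2] at h1; linarith
  rcases eq_or_ne z₀ 0 with rfl | hz0
  · refine ⟨0, fun z => ?_⟩
    simp only [inner_zero_left]
    have : h (N 0) ≤ h (N z) := by
      rw [(hN0 0).mpr rfl]
      exact hmono (Set.mem_Ici.mpr (le_refl (0:ℝ))) (hNneg z) (hNneg z)
    linarith
  · set r₀ := N z₀ with hr₀def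
    have hr₀ : 0 < r₀ := lt_of_le_of_ne (hNneg z₀) fun hh => hz0 ((hN0 z₀).mp hh.symm)
    set Sl := (fun r => (h r₀ - h r) / (r₀ - r)) '' Set.Ico (0:ℝ) r₀ with hSldef
    have h0mem : (h r₀ - h 0) / (r₀ - 0) ∈ Sl := ⟨0, ⟨le_refl 0, hr₀⟩, rfl⟩
    have hne : Sl.Nonempty := ⟨_, h0mem⟩
    have hslope : ∀ r ∈ Set.Ico (0:ℝ) r₀, ∀ r' > r₀,
        (h r₀ - h r) / (r₀ - r) ≤ (h r' - h r₀) / (r' - r₀) := by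
      intro r hr r' hr'
      exact hconv.slope_mono_adjacent hr.1 (le_of_lt (hr₀.trans hr'))
        hr.2 hr'
    have hbdd : BddAbove Sl := by
      refine ⟨(h (r₀ + 1) - h r₀) / (r₀ + 1 - r₀), ?_⟩
      rintro x ⟨r, hr, rfl⟩
      exact hslope r hr (r₀ + 1) (by linarith)
    set s := sSup Sl with hsdef
    have hs0 : 0 ≤ s := by
      refine le_trans ?_ (le_csSup hbdd h0mem)
      apply div_nonneg _ (by linarith)
      have := hmono (Set.mem_Ici.mpr (le_refl (0:ℝ))) (le_of_lt hr₀) (le_of_lt hr₀)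
      linarith
    have hsub : ∀ r, 0 ≤ r → h r₀ + s * (r - r₀) ≤ h r := by
      intro r hr
      rcases lt_trichotomy r r₀ with hlt | heq | hgt
      · have hmem : (h r₀ - h r) / (r₀ - r) ∈ Sl := ⟨r, ⟨hr, hlt⟩, rfl⟩
        have := le_csSup hbdd hmem
        rw [div_le_iff₀ (by linarith)] at this
        nlinarith
      · rw [heq]; ring_nf; rfl
      · have hle : s ≤ (h r - h r₀) / (r - r₀) := by
          refine csSup_le hne ?_
          rintro x ⟨r', hr', rfl⟩
          exact hslope r' hr' r hgt
        rw [le_div_iff₀ (by linarith)] at hle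
        nlinarith
    -- Hahn-Banach
    have hkey : ∀ x : (LinearPMap.mkSpanSingleton (K := ℝ) (L := ℝ) (σ := RingHom.id ℝ) z₀ r₀ hz0).domain,
        (LinearPMap.mkSpanSingleton (K := ℝ) (L := ℝ) (σ := RingHom.id ℝ) z₀ r₀ hz0) x ≤ N x := by
      rintro ⟨x, hx⟩
      obtain ⟨a, rfl⟩ := Submodule.mem_span_singleton.mp hx
      rw [LinearPMap.mkSpanSingleton'_apply]
      rw [hNsmul]
      have : a ≤ |a| := le_abs_self a
      have := mul_le_mul_of_nonneg_right this (le_of_lt hr₀)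
      simpa [smul_eq_mul] using this
    obtain ⟨g, hg1, hg2⟩ := exists_extension_of_le_sublinear
      (LinearPMap.mkSpanSingleton (K := ℝ) (L := ℝ) (σ := RingHom.id ℝ) z₀ r₀ hz0) N
      (fun c hc x => by rw [hNsmul, abs_of_pos hc]) hNadd hkey
    have hgz₀ : g z₀ = r₀ := by
      have := hg1 ⟨z₀, Submodule.mem_span_singleton_self z₀⟩
      rwa [LinearPMap.mkSpanSingleton_apply] at this
    set q₀ := (InnerProductSpace.toDual ℝ (EuclideanSpace ℝ (Fin 2))).symm
      (s • (LinearMap.toContinuousLinearMap g)) with hq₀def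
    have hq₀ : ∀ z, (inner ℝ q₀ z : ℝ) = s * g z := by
      intro z
      rw [hq₀def, InnerProductSpace.toDual_symm_apply]
      simp
    refine ⟨q₀, fun z => ?_⟩
    rw [hq₀ z, hq₀ z₀, hgz₀]
    have h1 : s * g z ≤ s * N z := mul_le_mul_of_nonneg_left (hg2 z) hs0
    have h2 := hsub (N z) (hNneg z)
    nlinarith

/-- for `c(z) = h(N z)` with `N` a norm on `ℝ²` and `h` strictly convex
increasing, every non-singleton face `∂c*(p)` is contained in a homothety `t·F` of a
maximal segment `F` of the unit sphere `{N = 1}`. -/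
theorem stmt19 (N : EuclideanSpace ℝ (Fin 2) → ℝ)
    (hN0 : ∀ z, N z = 0 ↔ z = 0)
    (hNsmul : ∀ (a : ℝ) (z : EuclideanSpace ℝ (Fin 2)), N (a • z) = |a| * N z)
    (hNadd : ∀ z w, N (z + w) ≤ N z + N w)
    (h : ℝ → ℝ)
    (hmono : MonotoneOn h (Set.Ici 0))
    (hconv : StrictConvexOn ℝ (Set.Ici 0) h)
    (c : EuclideanSpace ℝ (Fin 2) → ℝ) (hc : ∀ z, c z = h (N z))
    (p : EuclideanSpace ℝ (Fin 2)) :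
    (face c p).Subsingleton ∨
      ∃ t : ℝ, 0 ≤ t ∧ ∃ u v : EuclideanSpace ℝ (Fin 2), u ≠ v ∧
        segment ℝ u v ⊆ {z | N z = 1} ∧
        (∀ u' v', segment ℝ u' v' ⊆ {z | N z = 1} →
          segment ℝ u v ⊆ segment ℝ u' v' → segment ℝ u v = segment ℝ u' v') ∧
        face c p ⊆ (fun w => t • w) '' segment ℝ u v := by
  by_cases hsing : (face c p).Subsingleton
  · exact Or.inl hsing
  right
  rw [Set.not_subsingleton_iff] at hsing
  obtain ⟨z₁, hz₁, z₂, hz₂, hz12⟩ := hsing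
  have hsubgrad : ∀ z₀ : EuclideanSpace ℝ (Fin 2), ∃ q₀ : EuclideanSpace ℝ (Fin 2), ∀ z,
      (inner ℝ q₀ z : ℝ) - h (N z) ≤ (inner ℝ q₀ z₀ : ℝ) - h (N z₀) :=
    fun z₀ => stmt19_subgrad N hN0 hNsmul hNadd h hmono hconv.convexOn z₀
  have hNneg : ∀ z, 0 ≤ N z := by
    intro z
    have h1 := hNadd z (-z)
    have h2 : N (-z) = N z := by have := hNsmul (-1) z; simpa using this
    have h3 : N (z + -z) = 0 := by rw [add_neg_cancel]; exact (hN0 0).mpr rfl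
    rw [h3, h2] at h1; linarith
  have hlb : ∀ q, (((inner ℝ q (0:EuclideanSpace ℝ (Fin 2)) : ℝ) - c 0 : ℝ) : EReal) ≤ fenchelConj c q :=
    fun q => le_iSup (fun z => (((inner ℝ q z : ℝ) - c z : ℝ) : EReal)) 0
  have hnebot : ∀ q, fenchelConj c q ≠ ⊥ := by
    intro q hq
    have := hlb q
    rw [hq, le_bot_iff] at this
    exact EReal.coe_ne_bot _ this
  have hub0 : fenchelConj c 0 ≤ ((- c 0 : ℝ) : EReal) := by
    refine iSup_le fun z => ?_
    rw [EReal.coe_le_coe_iff]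
    have h1 : h (N 0) ≤ h (N z) := by
      rw [(hN0 0).mpr rfl]; exact hmono (Set.mem_Ici.mpr (le_refl (0:ℝ))) (hNneg z) (hNneg z)
    rw [hc z, hc 0, inner_zero_left]
    linarith
  -- top case
  have hnetop : fenchelConj c p ≠ ⊤ := by
    intro htop
    have h1 := hz₁ 0
    rw [htop, EReal.top_add_coe] at h1
    exact (lt_of_le_of_lt (h1.trans hub0) (EReal.coe_lt_top _)).false
  set a := (fenchelConj c p).toReal with hadef
  have hcpa : fenchelConj c p = (a : EReal) := (EReal.coe_toReal hnetop (hnebot p)).symm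
  -- key affine identity on the face
  have hface_eq : ∀ z ∈ face c p, h (N z) = (inner ℝ p z : ℝ) - a := by
    intro z hz
    obtain ⟨q₀, hq₀⟩ := hsubgrad z
    have hcq : fenchelConj c q₀ = (((inner ℝ q₀ z : ℝ) - c z : ℝ) : EReal) := by
      have hge : (((inner ℝ q₀ z : ℝ) - c z : ℝ) : EReal) ≤ fenchelConj c q₀ :=
        le_iSup (fun w => (((inner ℝ q₀ w : ℝ) - c w : ℝ) : EReal)) z
      refine le_antisymm (iSup_le fun w => ?_) hge
      rw [EReal.coe_le_coe_iff, hc w, hc z]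
      exact hq₀ w
    have h1 := hz q₀
    rw [hcq, hcpa, ← EReal.coe_add, EReal.coe_le_coe_iff] at h1
    have h2 : ((inner ℝ p z : ℝ) - c z : ℝ) ≤ a := by
      have h2' : (((inner ℝ p z : ℝ) - c z : ℝ) : EReal) ≤ fenchelConj c p :=
        le_iSup (fun w => (((inner ℝ p w : ℝ) - c w : ℝ) : EReal)) z
      rw [hcpa, EReal.coe_le_coe_iff] at h2'
      exact h2'
    have h3 : (inner ℝ z (q₀ - p) : ℝ) = (inner ℝ q₀ z : ℝ) - (inner ℝ p z : ℝ) := by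
      rw [inner_sub_right, real_inner_comm z q₀, real_inner_comm z p]
    rw [h3] at h1
    rw [hc z] at h1 h2
    linarith
  -- convexity of the face
  have hconvface : Convex ℝ (face c p) := by
    intro x hx y hy α β hα hβ hαβ
    intro q
    have hx' := hx q
    have hy' := hy q
    rcases eq_or_ne (fenchelConj c q) ⊤ with htop | hq
    · rw [htop]; exact le_top
    · set b := (fenchelConj c q).toReal with hbdef
      have hqb : fenchelConj c q = (b : EReal) := (EReal.coe_toReal hq (hnebot q)).symm
      rw [hqb, hcpa, ← EReal.coe_add, EReal.coe_le_coe_iff] at hx' hy' ⊢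
      have hin : (inner ℝ (α • x + β • y) (q - p) : ℝ)
          = α * (inner ℝ x (q - p) : ℝ) + β * (inner ℝ y (q - p) : ℝ) := by
        rw [inner_add_left, real_inner_smul_left, real_inner_smul_left]
      rw [hin]
      have e1 := mul_le_mul_of_nonneg_left hx' hα
      have e2 := mul_le_mul_of_nonneg_left hy' hβ
      have e3 : α * b + β * b = b := by rw [← add_mul, hαβ, one_mul]
      have e4 : α * a + β * a = a := by rw [← add_mul, hαβ, one_mul]
      nlinarith
  -- equal norms on the face
  have hNface : ∀ z ∈ face c p, ∀ z' ∈ face c p, N z = N z' := by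
    intro z hz z' hz'
    by_contra hne
    set m := ((1:ℝ)/2) • z + ((1:ℝ)/2) • z' with hmdef
    have hm : m ∈ face c p :=
      hconvface hz hz' (by norm_num) (by norm_num) (by norm_num)
    have e1 : h (N m) = (inner ℝ p m : ℝ) - a := hface_eq m hm
    have e2 := hface_eq z hz
    have e3 := hface_eq z' hz'
    have e4 : (inner ℝ p m : ℝ) = (1/2) * (inner ℝ p z : ℝ) + (1/2) * (inner ℝ p z' : ℝ) := by
      rw [hmdef, inner_add_right, real_inner_smul_right, real_inner_smul_right]
    have e5 : N m ≤ (1/2) * N z + (1/2) * N z' := by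
      calc N m ≤ N (((1:ℝ)/2) • z) + N (((1:ℝ)/2) • z') := hNadd _ _
        _ = (1/2) * N z + (1/2) * N z' := by
            rw [hNsmul, hNsmul, abs_of_pos (by norm_num : (0:ℝ) < 1/2)]
    have e6 : h (N m) ≤ h ((1/2) * N z + (1/2) * N z') := by
      refine hmono (hNneg m) ?_ e5
      have := hNneg z; have := hNneg z'
      simp only [Set.mem_Ici]; linarith
    have e7 : h ((1/2) * N z + (1/2) * N z') < (1/2) * h (N z) + (1/2) * h (N z') := by
      have := hconv.2 (Set.mem_Ici.mpr (hNneg z)) (Set.mem_Ici.mpr (hNneg z')) hne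
        (by norm_num : (0:ℝ) < 1/2) (by norm_num : (0:ℝ) < 1/2) (by norm_num)
      simpa [smul_eq_mul] using this
    linarith
  -- the scale t
  set t := N z₁ with htdef
  have ht : 0 < t := by
    rcases lt_or_eq_of_le (hNneg z₁) with h' | h'
    · exact h'
    · exfalso
      have hz₁0 : z₁ = 0 := (hN0 z₁).mp h'.symm
      have : N z₂ = 0 := (hNface z₂ hz₂ z₁ hz₁).trans h'.symm
      exact hz12 (hz₁0.trans ((hN0 z₂).mp this).symm)
  have hNt : ∀ z ∈ face c p, N z = t := fun z hz => hNface z hz z₁ hz₁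
  -- collinearity of the face
  have hline : ∀ z ∈ face c p, ∃ r : ℝ, z = z₁ + r • (z₂ - z₁) := by
    intro z hz
    by_contra hcon
    push_neg at hcon
    have li : LinearIndependent ℝ ![z - z₁, z₂ - z₁] := by
      rw [LinearIndependent.pair_iff]
      intro s' t' hst
      rcases eq_or_ne s' 0 with rfl | hs'
      · refine ⟨rfl, ?_⟩
        rw [zero_smul, zero_add, smul_eq_zero] at hst
        rcases hst with h' | h'
        · exact h'
        · exact absurd (sub_eq_zero.mp h').symm hz12
      · exfalso
        apply hcon (-(t' / s'))
        have : z - z₁ = (-(t' / s')) • (z₂ - z₁) := by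
          have := congrArg (fun w => (s'⁻¹ : ℝ) • w) hst
          simp only [smul_add, smul_smul, smul_zero] at this
          rw [inv_mul_cancel₀ hs', one_smul] at this
          have h2 : z - z₁ = -((s'⁻¹ * t') • (z₂ - z₁)) := by
            rw [eq_neg_iff_add_eq_zero]; exact this
          rw [h2, ← neg_smul]
          congr 1
          field_simp
        rw [← this]; abel
    have hspan : Submodule.span ℝ (Set.range ![z - z₁, z₂ - z₁]) = ⊤ := by
      apply li.span_eq_top_of_card_eq_finrank
      simp [finrank_euclideanSpace_fin]
    set m := ((1:ℝ)/3) • z + ((1:ℝ)/3) • z₁ + ((1:ℝ)/3) • z₂ with hmdef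
    have hm : m ∈ face c p := by
      have hm2 : ((1:ℝ)/2) • z₁ + ((1:ℝ)/2) • z₂ ∈ face c p :=
        hconvface hz₁ hz₂ (by norm_num) (by norm_num) (by norm_num)
      have hm3 : ((1:ℝ)/3) • z + ((2:ℝ)/3) • (((1:ℝ)/2) • z₁ + ((1:ℝ)/2) • z₂) ∈ face c p :=
        hconvface hz hm2 (by norm_num) (by norm_num) (by norm_num)
      convert hm3 using 1
      rw [hmdef]
      module
    -- decompose m over the basis
    have hmem : m ∈ Submodule.span ℝ ({z - z₁, z₂ - z₁} : Set (EuclideanSpace ℝ (Fin 2))) := by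
      have : Set.range ![z - z₁, z₂ - z₁] = {z - z₁, z₂ - z₁} := by
        simp only [Matrix.range_cons, Matrix.range_empty, Set.union_empty,
          Set.union_singleton]
        exact Set.pair_comm _ _
      rw [← this, hspan]
      trivial
    obtain ⟨e₁, e₂, hee⟩ := Submodule.mem_span_pair.mp hmem
    set δ := (1/6 : ℝ) / (1 + |e₁| + |e₂|) with hδdef
    have hδpos : 0 < δ := by
      apply div_pos (by norm_num)
      have := abs_nonneg e₁; have := abs_nonneg e₂; linarith
    have hδe₁ : |δ * e₁| ≤ 1/6 := by
      rw [abs_mul, abs_of_pos hδpos, hδdef]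
      rw [div_mul_eq_mul_div, div_le_iff₀ (by positivity)]
      have := abs_nonneg e₁; have := abs_nonneg e₂
      nlinarith [abs_nonneg e₁]
    have hδe₂ : |δ * e₂| ≤ 1/6 := by
      rw [abs_mul, abs_of_pos hδpos, hδdef]
      rw [div_mul_eq_mul_div, div_le_iff₀ (by positivity)]
      have := abs_nonneg e₁; have := abs_nonneg e₂
      nlinarith [abs_nonneg e₂]
    set x := 1/3 + δ * e₁ with hxdef
    set y := 1/3 + δ * e₂ with hydef
    have hx1 : 0 ≤ x := by
      have := abs_le.mp hδe₁; rw [hxdef]; linarith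
    have hy1 : 0 ≤ y := by
      have := abs_le.mp hδe₂; rw [hydef]; linarith
    have hxy1 : x + y ≤ 1 := by
      have h1 := abs_le.mp hδe₁; have h2 := abs_le.mp hδe₂
      rw [hxdef, hydef]; linarith
    have hw : (1 + δ) • m = x • z + (1 - x - y) • z₁ + y • z₂ := by
      have : (1 + δ) • m = m + δ • (e₁ • (z - z₁) + e₂ • (z₂ - z₁)) := by
        rw [hee, add_smul, one_smul]
      rw [this, hmdef, hxdef, hydef]
      module
    have hwface : (1 + δ) • m ∈ face c p := by
      rw [hw]
      have := hconvface.sum_mem (t := (Finset.univ : Finset (Fin 3)))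
        (w := ![x, 1 - x - y, y]) (z := ![z, z₁, z₂]) ?_ ?_ ?_
      · convert this using 1
        simp [Fin.sum_univ_three]
      · intro i _; fin_cases i <;> simp [hx1, hy1] <;> linarith
      · simp [Fin.sum_univ_three]; ring
      · intro i _; fin_cases i <;> simpa using ‹_›
    have hNm : N m = t := hNt m hm
    have hNw : N ((1 + δ) • m) = t := hNt _ hwface
    rw [hNsmul, hNm, abs_of_pos (by linarith)] at hNw
    nlinarith
  -- geometry on the unit sphere
  have htne : (t:ℝ) ≠ 0 := ne_of_gt ht
  set u₀ := t⁻¹ • z₁ with hu₀def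
  set v₀ := t⁻¹ • z₂ with hv₀def
  set d := v₀ - u₀ with hddef
  have hdne : d ≠ 0 := by
    rw [hddef, sub_ne_zero, hv₀def, hu₀def]
    intro hcontra
    exact hz12 (smul_right_injective (EuclideanSpace ℝ (Fin 2)) (inv_ne_zero htne) hcontra).symm
  have hsphere : ∀ z ∈ face c p, N (t⁻¹ • z) = 1 := by
    intro z hz
    rw [hNsmul, abs_of_pos (inv_pos.mpr ht), hNt z hz, inv_mul_cancel₀ htne]
  have hNu₀ : N u₀ = 1 := hsphere z₁ hz₁
  have hNv₀ : N v₀ = 1 := hsphere z₂ hz₂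
  have hNcomb : ∀ (α β : ℝ) (x y : EuclideanSpace ℝ (Fin 2)), 0 ≤ α → 0 ≤ β →
      N (α • x + β • y) ≤ α * N x + β * N y := by
    intro α β x y hα hβ
    calc N (α • x + β • y) ≤ N (α • x) + N (β • y) := hNadd _ _
      _ = α * N x + β * N y := by
          rw [hNsmul, hNsmul, abs_of_nonneg hα, abs_of_nonneg hβ]
  have hseg01 : ∀ α β : ℝ, 0 ≤ α → 0 ≤ β → α + β = 1 → N (α • u₀ + β • v₀) = 1 := by
    intro α β hα hβ hαβ
    have hmem : α • z₁ + β • z₂ ∈ face c p := hconvface hz₁ hz₂ hα hβ hαβ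
    have he : α • u₀ + β • v₀ = t⁻¹ • (α • z₁ + β • z₂) := by
      rw [hu₀def, hv₀def]; module
    rw [he]
    exact hsphere _ hmem
  -- N ≥ 1 on the whole line
  have hIge : ∀ r : ℝ, 1 ≤ N (u₀ + r • d) := by
    intro r
    rcases lt_trichotomy r 0 with hr | hr | hr
    · -- r < 0
      set lam := 1 / (1 - r) with hlamdef
      have hlam0 : 0 < lam := by rw [hlamdef]; exact div_pos one_pos (by linarith)
      have hlam1 : lam ≤ 1 := by
        rw [hlamdef, div_le_one (by linarith)]; linarith
      have he : u₀ = lam • (u₀ + r • d) + (1 - lam) • v₀ := by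
        have hkey : lam * (1 - r) = 1 := by
          rw [hlamdef]
          exact one_div_mul_cancel (ne_of_gt (by linarith : (0:ℝ) < 1 - r))
        have hcoef : lam * r + (1 - lam) = 0 := by linear_combination (-1 : ℝ) * hkey
        have expand : lam • (u₀ + r • d) + (1 - lam) • (u₀ + (1:ℝ) • d)
            = (lam + (1 - lam)) • u₀ + (lam * r + (1 - lam)) • d := by module
        have hv₀' : v₀ = u₀ + (1:ℝ) • d := by rw [hddef]; module
        rw [hv₀', expand, hcoef, zero_smul, add_zero]
        norm_num
      have hle : N u₀ ≤ lam * N (u₀ + r • d) + (1 - lam) * N v₀ := by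
        calc N u₀ = N (lam • (u₀ + r • d) + (1 - lam) • v₀) := congrArg N he
          _ ≤ lam * N (u₀ + r • d) + (1 - lam) * N v₀ :=
              hNcomb _ _ _ _ hlam0.le (by linarith)
      rw [hNu₀, hNv₀] at hle
      nlinarith
    · subst hr
      simp only [zero_smul, add_zero]
      rw [hNu₀]
    · rcases le_or_gt r 1 with hr1 | hr1
      · have := hseg01 (1 - r) r (by linarith) (le_of_lt hr) (by ring)
        have he : (1 - r) • u₀ + r • v₀ = u₀ + r • d := by rw [hddef]; module
        rw [he] at this
        rw [this]
      · -- r > 1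
        have hrpos : 0 < r := by linarith
        have he : v₀ = (1 - 1/r) • u₀ + (1/r) • (u₀ + r • d) := by
          have expand : (1 - 1/r) • u₀ + (1/r) • (u₀ + r • d)
              = ((1 - 1/r) + 1/r) • u₀ + ((1/r) * r) • d := by module
          rw [expand]
          have : (1:ℝ) - 1/r + 1/r = 1 := by ring
          rw [this, one_smul]
          rw [one_div, inv_mul_cancel₀ (ne_of_gt hrpos), one_smul]
          rw [hddef]; module
        have hle : N v₀ ≤ (1 - 1/r) * N u₀ + (1/r) * N (u₀ + r • d) := by
          rw [he]
          exact hNcomb _ _ _ _ (by rw [sub_nonneg, div_le_one hrpos]; linarith) (by positivity)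
        rw [hNu₀, hNv₀] at hle
        have h1r : 0 < 1/r := by positivity
        nlinarith
  -- the set of parameters on the line belonging to the sphere
  set I := {r : ℝ | N (u₀ + r • d) = 1} with hIdef
  have hI0 : (0:ℝ) ∈ I := by
    show N (u₀ + (0:ℝ) • d) = 1
    rw [zero_smul, add_zero, hNu₀]
  have hI1 : (1:ℝ) ∈ I := by
    show N (u₀ + (1:ℝ) • d) = 1
    have he : u₀ + (1:ℝ) • d = v₀ := by rw [hddef]; module
    rw [he, hNv₀]
  have hNd : 0 < N d := lt_of_le_of_ne (hNneg d) fun hh => hdne ((hN0 d).mp hh.symm)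
  have hNrev : ∀ x y, N x - N y ≤ N (x - y) := by
    intro x y
    have h1 := hNadd (x - y) y
    rw [sub_add_cancel] at h1
    linarith
  have hIbdd : ∀ r ∈ I, |r| ≤ (1 + N u₀) / N d := by
    intro r hr
    have hrr : N (u₀ + r • d) = 1 := hr
    have e1 : N (r • d) - N (-u₀) ≤ N (r • d - -u₀) := hNrev _ _
    have e2 : N (-u₀) = N u₀ := by have := hNsmul (-1) u₀; simpa using this
    have e3 : r • d - -u₀ = u₀ + r • d := by module
    rw [e2, e3, hrr, hNsmul] at e1
    rw [le_div_iff₀ hNd]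
    linarith
  have hIclosed : IsClosed I := by
    have hφ : Continuous fun r : ℝ => N (u₀ + r • d) := by
      have key : ∀ s' s'' : ℝ, N (u₀ + s' • d) - N (u₀ + s'' • d) ≤ N d * |s' - s''| := by
        intro s' s''
        have h1 := hNrev (u₀ + s' • d) (u₀ + s'' • d)
        have h2 : (u₀ + s' • d) - (u₀ + s'' • d) = (s' - s'') • d := by module
        rw [h2, hNsmul] at h1
        linarith [h1, mul_comm (|s' - s''|) (N d)]
      refine (LipschitzWith.of_dist_le_mul (K := Real.toNNReal (N d)) ?_).continuous
      intro r r'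
      rw [Real.dist_eq, Real.dist_eq, Real.coe_toNNReal _ (hNneg d)]
      exact abs_sub_le_iff.mpr ⟨key r r', by rw [abs_sub_comm]; exact key r' r⟩
    have : I = {r : ℝ | N (u₀ + r • d) = 1} := hIdef
    rw [this]
    exact isClosed_eq hφ continuous_const
  have hIne : I.Nonempty := ⟨0, hI0⟩
  have hIbddA : BddAbove I := ⟨(1 + N u₀) / N d, fun r hr => (le_abs_self r).trans (hIbdd r hr)⟩
  have hIbddB : BddBelow I := ⟨-((1 + N u₀) / N d), fun r hr => by
    have := hIbdd r hr; have := neg_abs_le r; linarith⟩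
  set rm := sInf I with hrmdef
  set rM := sSup I with hrMdef
  have hrmI : N (u₀ + rm • d) = 1 := hIclosed.csInf_mem hIne hIbddB
  have hrMI : N (u₀ + rM • d) = 1 := hIclosed.csSup_mem hIne hIbddA
  have hrm0 : rm ≤ 0 := csInf_le hIbddB hI0
  have hrM1 : 1 ≤ rM := le_csSup hIbddA hI1
  have hrmM : rm < rM := lt_of_le_of_lt hrm0 (lt_of_lt_of_le one_pos hrM1)
  have expand : ∀ (A B : ℝ), A • (u₀ + rm • d) + B • (u₀ + rM • d)
      = (A + B) • u₀ + (A * rm + B * rM) • d := by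
    intro A B; module
  have hIcc : I = Set.Icc rm rM := by
    ext x
    constructor
    · intro hx; exact ⟨csInf_le hIbddB hx, le_csSup hIbddA hx⟩
    · rintro ⟨h1, h2⟩
      set θ := (x - rm) / (rM - rm) with hθdef
      have hθ0 : 0 ≤ θ := div_nonneg (by linarith) (by linarith)
      have hθ1 : θ ≤ 1 := by rw [hθdef, div_le_one (by linarith)]; linarith
      have hne' : rM - rm ≠ 0 := ne_of_gt (by linarith)
      have hxθ : (1 - θ) * rm + θ * rM = x := by
        rw [hθdef]
        field_simp
        ring
      show N (u₀ + x • d) = 1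
      refine le_antisymm ?_ (hIge x)
      have hcomb : u₀ + x • d = (1 - θ) • (u₀ + rm • d) + θ • (u₀ + rM • d) := by
        rw [expand, hxθ]
        have : (1:ℝ) - θ + θ = 1 := by ring
        rw [this, one_smul]
      rw [hcomb]
      calc N _ ≤ (1 - θ) * N (u₀ + rm • d) + θ * N (u₀ + rM • d) :=
            hNcomb _ _ _ _ (by linarith) hθ0
        _ = 1 := by rw [hrmI, hrMI]; ring
  have hmemseg : ∀ x ∈ Set.Icc rm rM,
      u₀ + x • d ∈ segment ℝ (u₀ + rm • d) (u₀ + rM • d) := by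
    rintro x ⟨h1, h2⟩
    refine ⟨(rM - x) / (rM - rm), (x - rm) / (rM - rm),
      div_nonneg (by linarith) (by linarith), div_nonneg (by linarith) (by linarith), ?_, ?_⟩
    · rw [← add_div, show rM - x + (x - rm) = rM - rm by ring,
        div_self (ne_of_gt (by linarith : (0:ℝ) < rM - rm))]
    · rw [expand]
      have hne' : rM - rm ≠ 0 := ne_of_gt (by linarith)
      have ha : (rM - x) / (rM - rm) + (x - rm) / (rM - rm) = 1 := by
        rw [← add_div, show rM - x + (x - rm) = rM - rm by ring, div_self hne']
      have hb : (rM - x) / (rM - rm) * rm + (x - rm) / (rM - rm) * rM = x := by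
        field_simp
        ring
      rw [ha, hb, one_smul]
  have hsegmem : ∀ w ∈ segment ℝ (u₀ + rm • d) (u₀ + rM • d),
      ∃ x, x ∈ Set.Icc rm rM ∧ w = u₀ + x • d := by
    rintro w ⟨A, B, hA, hB, hAB, rfl⟩
    refine ⟨A * rm + B * rM, ⟨by nlinarith, by nlinarith⟩, ?_⟩
    rw [expand, hAB, one_smul]
  -- assemble
  have hsegsphere : segment ℝ (u₀ + rm • d) (u₀ + rM • d) ⊆ {z | N z = 1} := by
    intro w hw
    obtain ⟨x, hx, rfl⟩ := hsegmem w hw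
    have : x ∈ I := hIcc ▸ hx
    exact this
  have huvne : u₀ + rm • d ≠ u₀ + rM • d := by
    intro heq
    have hz : (rm - rM) • d = 0 := by
      calc (rm - rM) • d = (u₀ + rm • d) - (u₀ + rM • d) := by module
        _ = 0 := sub_eq_zero.mpr heq
    rcases smul_eq_zero.mp hz with h' | h'
    · have : rm = rM := by linarith [sub_eq_zero.mp h']
      exact (ne_of_lt hrmM) this
    · exact hdne h'
  have hmax : ∀ u' v', segment ℝ u' v' ⊆ {z | N z = 1} →
      segment ℝ (u₀ + rm • d) (u₀ + rM • d) ⊆ segment ℝ u' v' →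
      segment ℝ (u₀ + rm • d) (u₀ + rM • d) = segment ℝ u' v' := by
    intro u' v' hsub hsub2
    have hu := hsub2 (left_mem_segment ℝ _ _)
    have hv := hsub2 (right_mem_segment ℝ _ _)
    rw [segment_eq_image'] at hu hv
    obtain ⟨θ₁, hθ₁mem, hu⟩ := hu
    obtain ⟨θ₂, hθ₂mem, hv⟩ := hv
    have hvu : (rM - rm) • d = (θ₂ - θ₁) • (v' - u') := by
      calc (rM - rm) • d = (u₀ + rM • d) - (u₀ + rm • d) := by module
        _ = (u' + θ₂ • (v' - u')) - (u' + θ₁ • (v' - u')) := by rw [← hu, ← hv]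
        _ = (θ₂ - θ₁) • (v' - u') := by module
    have hθne : θ₂ - θ₁ ≠ 0 := by
      intro h0
      rw [h0, zero_smul] at hvu
      rcases smul_eq_zero.mp hvu with h' | h'
      · have : rM = rm := by linarith [sub_eq_zero.mp h']
        exact (ne_of_lt hrmM) this.symm
      · exact hdne h'
    set ρ := (θ₂ - θ₁)⁻¹ * (rM - rm) with hρdef
    have hv'u' : v' - u' = ρ • d := by
      rw [hρdef, mul_smul, hvu, inv_smul_smul₀ hθne]
    have hu' : u' = u₀ + (rm - θ₁ * ρ) • d := by
      have e : u' = (u₀ + rm • d) - θ₁ • (v' - u') := by rw [← hu]; module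
      rw [e, hv'u']; module
    have hv'2 : v' = u₀ + (rm - θ₁ * ρ + ρ) • d := by
      have e : v' = u' + (v' - u') := by abel
      rw [e, hv'u', hu']; module
    have hu'mem : u' ∈ segment ℝ (u₀ + rm • d) (u₀ + rM • d) := by
      have h1 : N u' = 1 := hsub (left_mem_segment ℝ u' v')
      rw [hu'] at h1
      have h2 : (rm - θ₁ * ρ) ∈ Set.Icc rm rM := by rw [← hIcc]; exact h1
      rw [hu']
      exact hmemseg _ h2
    have hv'mem : v' ∈ segment ℝ (u₀ + rm • d) (u₀ + rM • d) := by
      have h1 : N v' = 1 := hsub (right_mem_segment ℝ u' v')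
      rw [hv'2] at h1
      have h2 : (rm - θ₁ * ρ + ρ) ∈ Set.Icc rm rM := by rw [← hIcc]; exact h1
      rw [hv'2]
      exact hmemseg _ h2
    exact Set.Subset.antisymm hsub2
      ((convex_segment _ _).segment_subset hu'mem hv'mem)
  have hfinal : face c p ⊆ (fun w => t • w) '' segment ℝ (u₀ + rm • d) (u₀ + rM • d) := by
    intro w hw
    obtain ⟨r, hr⟩ := hline w hw
    have hw1 : t⁻¹ • w = u₀ + r • d := by
      rw [hddef, hv₀def, hu₀def, hr]; module
    have hrI : r ∈ Set.Icc rm rM := by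
      rw [← hIcc]
      show N (u₀ + r • d) = 1
      rw [← hw1]
      exact hsphere w hw
    refine ⟨t⁻¹ • w, by rw [hw1]; exact hmemseg r hrI, ?_⟩
    simp only
    rw [smul_inv_smul₀ htne]
  exact ⟨t, ht.le, u₀ + rm • d, u₀ + rM • d, huvne, hsegsphere, hmax, hfinal⟩
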